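/- Let Ω be a measurable space, let E and F be standard Borel spaces, let X : Ω → E and Y : Ω → F be measurable, and let μ and ν be probability measures on Ω (the pre-recourse and post-intervention distributions). Assume: (i) invariance of the conditional distribution, i.e. the conditional distribution kernel of Y given X under ν agrees with the one under μ, ν-almost everywhere in X (condDistrib Y X ν x = condDistrib Y X μ x for (ν.map X)-almost every x); (ii) the pushforward ν.map X is absolutely continuous with respect to μ.map X; and (iii) there is a measurable f : E → F with Y = f ∘ X μ-almost surely. Then Y = f ∘ X ν-almost surely. -/

import Mathlib

open MeasureTheory ProbabilityTheory

/-- Measure-theoretic form of Proposition 2: if the regular conditional distribution of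
the target `Y` given the features `X` is invariant between the pre-recourse distribution
`μ` and the post-intervention distribution `ν` (a.e. in the feature marginal of `ν`),
the feature marginal of `ν` is absolutely continuous w.r.t. that of `μ` (no
extrapolation), and a measurable predictor `f` satisfies `Y = f ∘ X` μ-a.s., then
`Y = f ∘ X` ν-a.s. as well. -/
theorem perfect_prediction_transfers_to_interventional
    {Ω E F : Type*} [MeasurableSpace Ω]
    [MeasurableSpace E] [StandardBorelSpace E]
    [MeasurableSpace F] [StandardBorelSpace F] [Nonempty F]
    (X : Ω → E) (Y : Ω → F) (hX : Measurable X) (hY : Measurable Y)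
    (μ ν : Measure Ω) [IsProbabilityMeasure μ] [IsProbabilityMeasure ν]
    (hinv : ∀ᵐ x ∂(ν.map X), condDistrib Y X ν x = condDistrib Y X μ x)
    (hac : ν.map X ≪ μ.map X)
    (f : E → F) (hf : Measurable f)
    (hμ : Y =ᵐ[μ] f ∘ X) :
    Y =ᵐ[ν] f ∘ X := by
  letI := upgradeStandardBorel F
  -- the "error set" in the product space
  set s : Set (E × F) := {p : E × F | p.2 ≠ f p.1} with hs_def
  have hs : MeasurableSet s :=
    (measurable_snd.stronglyMeasurable.measurableSet_eq_fun
      (hf.comp measurable_fst).stronglyMeasurable).compl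
  -- disintegration of the joint laws
  have hdis : ∀ (m : Measure Ω) [IsProbabilityMeasure m],
      m.map X ⊗ₘ condDistrib Y X m = m.map (fun a => (X a, Y a)) := by
    intro m _
    rw [condDistrib, ← Measure.fst_map_prodMk₀ hY.aemeasurable]
    exact (m.map (fun a => (X a, Y a))).disintegrate _
  -- translate the a.s. equality into the joint law
  have hmap : ∀ (m : Measure Ω), Measure.map (fun a => (X a, Y a)) m s
      = m {ω | Y ω ≠ f (X ω)} := by
    intro m
    rw [Measure.map_apply (hX.prodMk hY) hs]
    rfl
  have hμ0 : μ.map (fun a => (X a, Y a)) s = 0 := by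
    rw [hmap]
    exact hμ
  -- hence the conditional kernel under μ gives the fiber measure zero a.e.
  have hμae : ∀ᵐ x ∂(μ.map X), condDistrib Y X μ x {y | y ≠ f x} = 0 := by
    have := hdis μ
    rw [← this, Measure.compProd_apply hs] at hμ0
    have h := (lintegral_eq_zero_iff
      (Kernel.measurable_kernel_prodMk_left hs)).mp hμ0
    filter_upwards [h] with x hx
    simpa [hs_def] using hx
  -- transfer to ν.map X via absolute continuity, then to condDistrib of ν via invariance
  have hνae : ∀ᵐ x ∂(ν.map X), condDistrib Y X ν x {y | y ≠ f x} = 0 := by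
    filter_upwards [hac.ae_le hμae, hinv] with x hx heq
    rw [heq]; exact hx
  -- reassemble
  have hν0 : ν.map (fun a => (X a, Y a)) s = 0 := by
    rw [← hdis ν, Measure.compProd_apply hs]
    refine lintegral_eq_zero_iff (Kernel.measurable_kernel_prodMk_left hs) |>.mpr ?_
    filter_upwards [hνae] with x hx
    simpa [hs_def] using hx
  have : ν {ω | Y ω ≠ f (X ω)} = 0 := by rw [← hmap]; exact hν0
  exact this
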